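/- There exist n-vertex graphs with O(n) edges whose every EPG-representation requires a grid of width Ω(n) and height Ω(n), hence area Ω(n²). Specifically, if G is a bounded-degree graph with pathwidth Ω(n), then the graph G′ obtained by subdividing every edge of G once is triangle-free, has O(n) vertices and edges, has pathwidth Ω(n) (since G is a minor of G′), and therefore every EPG-representation of G′ has both Ω(n) rows and Ω(n) columns. -/

import Mathlib

/-- Two grid points are adjacent (at distance 1). -/
def adjPt (p q : ℤ × ℤ) : Prop :=
  (p.1 = q.1 ∧ (p.2 - q.2 = 1 ∨ q.2 - p.2 = 1)) ∨
  (p.2 = q.2 ∧ (p.1 - q.1 = 1 ∨ q.1 - p.1 = 1))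

/-- A (simple) path in the rectangular integer grid. -/
structure GridPath where
  len : ℕ
  pts : Fin (len + 1) → ℤ × ℤ
  adj : ∀ i : Fin len, adjPt (pts i.castSucc) (pts i.succ)
  inj : Function.Injective pts

/-- The set of grid-edges used by a grid path. -/
def GridPath.edges (P : GridPath) : Set (Sym2 (ℤ × ℤ)) :=
  {e | ∃ i : Fin P.len, e = s(P.pts i.castSucc, P.pts i.succ)}

/-- The set of grid-points used by a grid path. -/
def GridPath.points (P : GridPath) : Set (ℤ × ℤ) :=
  Set.range P.pts

/-- The grid path lies inside the `w × h` grid. -/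
def GridPath.InGrid (P : GridPath) (w h : ℕ) : Prop :=
  ∀ p ∈ P.points, 1 ≤ p.1 ∧ p.1 ≤ (w : ℤ) ∧ 1 ≤ p.2 ∧ p.2 ≤ (h : ℤ)

/-- An EPG-representation: vertices are adjacent iff their paths share a grid-edge. -/
def IsEPGRep {V : Type*} (G : SimpleGraph V) (rep : V → GridPath) : Prop :=
  ∀ v w : V, G.Adj v w ↔ v ≠ w ∧ ((rep v).edges ∩ (rep w).edges).Nonempty



lemma adjPt_symm {p q : ℤ × ℤ} (h : adjPt p q) : adjPt q p := by
  unfold adjPt at *; omega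

lemma adjPt_step {p q : ℤ × ℤ} (h : adjPt p q) :
    q.1 = p.1 ∨ q.1 = p.1 + 1 ∨ q.1 = p.1 - 1 := by
  unfold adjPt at h; omega

lemma int_ivt (g : ℕ → ℤ)
    (hstep : ∀ i, g (i+1) = g i ∨ g (i+1) = g i + 1 ∨ g (i+1) = g i - 1)
    (x : ℤ) : ∀ b a, a ≤ b → g a ≤ x → x ≤ g b → ∃ k, a ≤ k ∧ k ≤ b ∧ g k = x := by
  intro b
  induction b with
  | zero => intro a ha h1 h2
            have : a = 0 := by omega
            subst this
            exact ⟨0, le_refl _, le_refl _, by omega⟩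
  | succ b ih =>
    intro a ha h1 h2
    by_cases hx : x ≤ g b
    · rcases le_or_gt a b with hab | hab
      · obtain ⟨k, hk1, hk2, hk3⟩ := ih a hab h1 hx
        exact ⟨k, hk1, by omega, hk3⟩
      · -- a = b + 1
        have : a = b + 1 := by omega
        subst this
        exact ⟨b+1, le_refl _, le_refl _, by omega⟩
    · push_neg at hx
      have := hstep b
      have : g (b+1) = x := by omega
      exact ⟨b+1, by omega, le_refl _, this⟩

lemma int_ivt_down (g : ℕ → ℤ)
    (hstep : ∀ i, g (i+1) = g i ∨ g (i+1) = g i + 1 ∨ g (i+1) = g i - 1)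
    (x : ℤ) (b a : ℕ) (hab : a ≤ b) (h1 : x ≤ g a) (h2 : g b ≤ x) :
    ∃ k, a ≤ k ∧ k ≤ b ∧ g k = x := by
  obtain ⟨k, hk1, hk2, hk3⟩ := int_ivt (fun i => -g i)
    (fun i => by have := hstep i; omega) (-x) b a hab
    (show -g a ≤ -x by omega) (show -x ≤ -g b by omega)
  have : -g k = -x := hk3
  exact ⟨k, hk1, hk2, by omega⟩

namespace GridPath

noncomputable def lcol (P : GridPath) : ℤ :=
  (Finset.univ.image (fun i => (P.pts i).1)).min' (by simp [Finset.univ_nonempty])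

noncomputable def rcol (P : GridPath) : ℤ :=
  (Finset.univ.image (fun i => (P.pts i).1)).max' (by simp [Finset.univ_nonempty])

lemma lcol_le (P : GridPath) (i : Fin (P.len + 1)) : P.lcol ≤ (P.pts i).1 :=
  Finset.min'_le _ _ (Finset.mem_image.2 ⟨i, Finset.mem_univ _, rfl⟩)

lemma le_rcol (P : GridPath) (i : Fin (P.len + 1)) : (P.pts i).1 ≤ P.rcol := by
  apply Finset.le_max'
  exact Finset.mem_image.2 ⟨i, Finset.mem_univ _, rfl⟩

lemma lcol_le_rcol (P : GridPath) : P.lcol ≤ P.rcol :=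
  le_trans (P.lcol_le ⟨0, Nat.succ_pos _⟩) (P.le_rcol _)

lemma exists_lcol (P : GridPath) : ∃ i, (P.pts i).1 = P.lcol := by
  have := Finset.min'_mem (Finset.univ.image (fun i => (P.pts i).1))
    (by simp [Finset.univ_nonempty])
  rw [Finset.mem_image] at this
  obtain ⟨i, _, hi⟩ := this
  exact ⟨i, hi⟩

lemma exists_rcol (P : GridPath) : ∃ i, (P.pts i).1 = P.rcol := by
  have := Finset.max'_mem (Finset.univ.image (fun i => (P.pts i).1))
    (by simp [Finset.univ_nonempty])
  rw [Finset.mem_image] at this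
  obtain ⟨i, _, hi⟩ := this
  exact ⟨i, hi⟩

/-- Discrete IVT along a grid path, for columns. -/
lemma exists_col (P : GridPath) (x : ℤ) (h1 : P.lcol ≤ x) (h2 : x ≤ P.rcol) :
    ∃ i : Fin (P.len + 1), (P.pts i).1 = x := by
  set L := P.len with hL
  set g : ℕ → ℤ := fun k => (P.pts ⟨min k L, by omega⟩).1 with hg
  have hstep : ∀ i, g (i+1) = g i ∨ g (i+1) = g i + 1 ∨ g (i+1) = g i - 1 := by
    intro i
    rcases Nat.lt_or_ge i L with hi | hi
    · have hadj := P.adj ⟨i, hi⟩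
      have e1 : (⟨i, hi⟩ : Fin L).castSucc = ⟨min i L, by omega⟩ := by
        apply Fin.ext; simp [Fin.castSucc]; omega
      have e2 : (⟨i, hi⟩ : Fin L).succ = ⟨min (i+1) L, by omega⟩ := by
        apply Fin.ext; simp [Fin.succ]; omega
      rw [e1, e2] at hadj
      have := adjPt_step hadj
      simp only [hg]
      omega
    · have hmin : min i L = min (i+1) L := by omega
      left
      show (P.pts ⟨min (i+1) L, by omega⟩).1 = (P.pts ⟨min i L, by omega⟩).1
      congr 1
      congr 1
      apply Fin.ext
      simp only
      omega
  have hidx : ∀ i : Fin (P.len + 1), g i.val = (P.pts i).1 := by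
    intro i
    show (P.pts ⟨min i.val L, by omega⟩).1 = (P.pts i).1
    congr 1
    congr 1
    apply Fin.ext
    simp only
    have := i.isLt
    omega
  obtain ⟨i0, hi0⟩ := P.exists_lcol
  obtain ⟨i1, hi1⟩ := P.exists_rcol
  rcases le_or_gt i0.val i1.val with hc | hc
  · have ha : g i0.val = P.lcol := (hidx i0).trans hi0
    have hb : g i1.val = P.rcol := (hidx i1).trans hi1
    obtain ⟨k, hk1, hk2, hk3⟩ := int_ivt g hstep x i1.val i0.val hc (by omega) (by omega)
    refine ⟨⟨min k L, by omega⟩, hk3⟩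
  · have ha : g i1.val = P.rcol := (hidx i1).trans hi1
    have hb : g i0.val = P.lcol := (hidx i0).trans hi0
    obtain ⟨k, hk1, hk2, hk3⟩ := int_ivt_down g hstep x i0.val i1.val (by omega)
      (by omega) (by omega)
    refine ⟨⟨min k L, by omega⟩, hk3⟩

/-- every point of a positive-length path is the endpoint of some edge of the path -/
lemma exists_edge_at (P : GridPath) (hlen : 0 < P.len) (i : Fin (P.len + 1)) :
    ∃ b, s(P.pts i, b) ∈ P.edges ∧ adjPt (P.pts i) b ∧ b ∈ P.points := by
  rcases Nat.lt_or_ge i.val P.len with hi | hi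
  · have e1 : (⟨i.val, hi⟩ : Fin P.len).castSucc = i := by apply Fin.ext; simp
    refine ⟨P.pts (⟨i.val, hi⟩ : Fin P.len).succ, ⟨⟨i.val, hi⟩, by rw [e1]⟩, ?_, ⟨_, rfl⟩⟩
    have := P.adj ⟨i.val, hi⟩
    rwa [e1] at this
  · have hiv : i.val = P.len := by omega
    have hj : P.len - 1 < P.len := by omega
    have e1 : (⟨P.len-1, hj⟩ : Fin P.len).succ = i := by
      apply Fin.ext; simp [Fin.succ]; omega
    refine ⟨P.pts (⟨P.len - 1, hj⟩ : Fin P.len).castSucc, ⟨⟨P.len-1, hj⟩, ?_⟩, ?_, ⟨_, rfl⟩⟩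
    · rw [e1, Sym2.eq_swap]
    · have := P.adj ⟨P.len-1, hj⟩
      rw [e1] at this
      exact adjPt_symm this

/-- transpose of a grid path -/
def transpose (P : GridPath) : GridPath where
  len := P.len
  pts := fun i => ((P.pts i).2, (P.pts i).1)
  adj := fun i => by
    have := P.adj i
    unfold adjPt at this ⊢
    dsimp only
    omega
  inj := fun a b hab => by
    apply P.inj
    have h1 := congrArg Prod.fst hab
    have h2 := congrArg Prod.snd hab
    simp at h1 h2
    exact Prod.ext h2 h1

lemma transpose_edges (P : GridPath) :
    P.transpose.edges = (Sym2.map (fun p : ℤ × ℤ => (p.2, p.1))) '' P.edges := by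
  ext e
  constructor
  · rintro ⟨i, rfl⟩
    exact ⟨s(P.pts i.castSucc, P.pts i.succ), ⟨i, rfl⟩, by simp [transpose]⟩
  · rintro ⟨e', ⟨i, rfl⟩, rfl⟩
    exact ⟨i, by simp [transpose]⟩

lemma transpose_inGrid (P : GridPath) (w h : ℕ) (hP : P.InGrid w h) :
    P.transpose.InGrid h w := by
  rintro p ⟨i, rfl⟩
  have := hP (P.pts i) ⟨i, rfl⟩
  simp only [transpose]
  exact ⟨this.2.2.1, this.2.2.2, this.1, this.2.1⟩

end GridPath

lemma isEPGRep_transpose {V : Type*} (G : SimpleGraph V) (rep : V → GridPath)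
    (h : IsEPGRep G rep) : IsEPGRep G (fun v => (rep v).transpose) := by
  intro v w
  rw [h v w]
  constructor
  · rintro ⟨hne, e, he1, he2⟩
    exact ⟨hne, Sym2.map (fun p : ℤ × ℤ => (p.2, p.1)) e,
      by rw [GridPath.transpose_edges]; exact ⟨e, he1, rfl⟩,
      by rw [GridPath.transpose_edges]; exact ⟨e, he2, rfl⟩⟩
  · rintro ⟨hne, e, he1, he2⟩
    rw [GridPath.transpose_edges] at he1 he2
    obtain ⟨e1, he1', rfl⟩ := he1
    obtain ⟨e2, he2', heq⟩ := he2
    have hinj : Function.Injective (Sym2.map (fun p : ℤ × ℤ => (p.2, p.1))) := by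
      intro a b hab
      have : ∀ x : Sym2 (ℤ×ℤ), Sym2.map (fun p : ℤ × ℤ => (p.2, p.1))
          (Sym2.map (fun p : ℤ × ℤ => (p.2, p.1)) x) = x := by
        intro x
        induction x using Sym2.ind with
        | _ a b => simp
      calc a = _ := (this a).symm
        _ = _ := by rw [hab]
        _ = b := this b
    have : e2 = e1 := hinj heq
    subst this
    exact ⟨hne, e2, he1', he2'⟩

open Finset in
theorem exists_disperser (M : ℕ) (hM : 1 ≤ M) :
    ∃ f : Fin 15 × Fin (5*M) → Fin (5*M),
      ∀ A B : Finset (Fin (5*M)), A.card = 2*M → B.card = 2*M → Disjoint A B →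
        ∃ j a, a ∈ A ∧ f (j, a) ∈ B := by
  classical
  set m := 5*M with hm
  have hmpos : 0 < m := by omega
  set s := 2*M with hs
  let Bad : Finset (Fin m) × Finset (Fin m) → Finset ((Fin 15 × Fin m) → Fin m) :=
    fun AB => Fintype.piFinset (fun x => if x.2 ∈ AB.1 then AB.2ᶜ else Finset.univ)
  let PAIRS : Finset (Finset (Fin m) × Finset (Fin m)) :=
    (Finset.univ.powerset ×ˢ Finset.univ.powerset).filter
      (fun AB => AB.1.card = s ∧ AB.2.card = s ∧ Disjoint AB.1 AB.2)
  have hbadcard : ∀ AB ∈ PAIRS, (Bad AB).card = (3*M)^(30*M) * (5*M)^(45*M) := by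
    intro AB hAB
    simp only [PAIRS, mem_filter] at hAB
    obtain ⟨-, hA, hB, -⟩ := hAB
    have h1 : (Bad AB).card = ∏ x : Fin 15 × Fin m,
        (if x.2 ∈ AB.1 then AB.2ᶜ.card else (Finset.univ : Finset (Fin m)).card) := by
      rw [Fintype.card_piFinset]
      exact Finset.prod_congr rfl (fun x _ => by split <;> rfl)
    rw [h1]
    have h2 : ∀ a : Fin m, ∀ j : Fin 15,
        (if a ∈ AB.1 then AB.2ᶜ.card else (Finset.univ : Finset (Fin m)).card)
          = (if a ∈ AB.1 then 3*M else 5*M) := by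
      intro a j
      rw [Finset.card_compl, hB, Finset.card_univ, Fintype.card_fin]
      split <;> [omega; omega]
    rw [Fintype.prod_prod_type]
    have h3 : ∀ j : Fin 15, ∏ a : Fin m,
        (if (j, a).2 ∈ AB.1 then AB.2ᶜ.card else (Finset.univ : Finset (Fin m)).card)
        = (3*M)^(2*M) * (5*M)^(3*M) := by
      intro j
      have := Finset.prod_ite_mem (Finset.univ : Finset (Fin m)) AB.1
        (fun _ => (1:ℕ))
      calc ∏ a : Fin m, (if (j, a).2 ∈ AB.1 then AB.2ᶜ.card else (Finset.univ : Finset (Fin m)).card)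
          = ∏ a : Fin m, (if a ∈ AB.1 then 3*M else 5*M) :=
            Finset.prod_congr rfl (fun a _ => h2 a j)
        _ = (3*M)^(AB.1.card) * (5*M)^((Finset.univ.filter (fun a => a ∉ AB.1)).card) := by
            rw [Finset.prod_ite]
            simp [Finset.prod_const, Finset.filter_mem_eq_inter]
        _ = (3*M)^(2*M) * (5*M)^(3*M) := by
            congr 1
            · rw [hA]
            · congr 1
              have : Finset.univ.filter (fun a => a ∉ AB.1) = AB.1ᶜ := by
                ext a; simp
              rw [this, Finset.card_compl, hA, Fintype.card_fin]
              omega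
    calc ∏ j : Fin 15, ∏ a : Fin m,
          (if (j, a).2 ∈ AB.1 then AB.2ᶜ.card else (Finset.univ : Finset (Fin m)).card)
        = ∏ j : Fin 15, ((3*M)^(2*M) * (5*M)^(3*M)) := Finset.prod_congr rfl (fun j _ => h3 j)
      _ = ((3*M)^(2*M) * (5*M)^(3*M))^(15) := by rw [Finset.prod_const, Finset.card_univ]; simp
      _ = (3*M)^(30*M) * (5*M)^(45*M) := by
          rw [mul_pow, ← pow_mul, ← pow_mul]
          ring_nf
  -- union bound
  have hcount : ((PAIRS.biUnion Bad).card : ℕ) < (Finset.univ : Finset ((Fin 15 × Fin m) → Fin m)).card := by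
    have h4 : (PAIRS.biUnion Bad).card ≤ PAIRS.card * ((3*M)^(30*M) * (5*M)^(45*M)) := by
      calc (PAIRS.biUnion Bad).card ≤ ∑ AB ∈ PAIRS, (Bad AB).card := Finset.card_biUnion_le
        _ = ∑ AB ∈ PAIRS, ((3*M)^(30*M) * (5*M)^(45*M)) := Finset.sum_congr rfl hbadcard
        _ = PAIRS.card * ((3*M)^(30*M) * (5*M)^(45*M)) := by
            rw [Finset.sum_const, smul_eq_mul]
    have h5 : PAIRS.card ≤ 4^m := by
      calc PAIRS.card ≤ ((Finset.univ.powerset ×ˢ Finset.univ.powerset) :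
              Finset (Finset (Fin m) × Finset (Fin m))).card :=
            Finset.card_le_card (Finset.filter_subset _ _)
        _ = 2^m * 2^m := by
            rw [Finset.card_product, Finset.card_powerset]
            simp [Finset.card_univ]
        _ = 4^m := by rw [← mul_pow]; norm_num
    have huniv : (Finset.univ : Finset ((Fin 15 × Fin m) → Fin m)).card = (5*M)^(75*M) := by
      rw [Finset.card_univ, Fintype.card_fun]
      simp only [Fintype.card_prod, Fintype.card_fin, hm]
      congr 1
      ring
    rw [huniv]
    have key : 4^m * ((3*M)^(30*M) * (5*M)^(45*M)) < (5*M)^(75*M) := by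
      have e1 : (5*M)^(75*M) = (5*M)^(30*M) * (5*M)^(45*M) := by
        rw [← pow_add]; ring_nf
      rw [e1, ← mul_assoc]
      apply (Nat.mul_lt_mul_right (by positivity)).2
      have p1 : (4:ℕ)^(5*M) = 1024^M := by rw [pow_mul]; norm_num
      have p2 : ((3:ℕ)*M)^(30*M) = (3^30)^M * M^(30*M) := by rw [mul_pow, pow_mul]
      have p3 : ((5:ℕ)*M)^(30*M) = (5^30)^M * M^(30*M) := by rw [mul_pow, pow_mul]
      rw [hm, p1, p2, p3, ← mul_assoc, ← mul_pow]
      apply (Nat.mul_lt_mul_right (pow_pos (show 0 < M by omega) _)).2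
      exact Nat.pow_lt_pow_left (by norm_num) (show M ≠ 0 by omega)
    calc (PAIRS.biUnion Bad).card ≤ PAIRS.card * ((3*M)^(30*M) * (5*M)^(45*M)) := h4
      _ ≤ 4^m * ((3*M)^(30*M) * (5*M)^(45*M)) := Nat.mul_le_mul_right _ h5
      _ < (5*M)^(75*M) := key
  -- extract good f
  have : ∃ f : (Fin 15 × Fin m) → Fin m, f ∉ PAIRS.biUnion Bad := by
    by_contra hcon
    push_neg at hcon
    have : (Finset.univ : Finset ((Fin 15 × Fin m) → Fin m)) ⊆ PAIRS.biUnion Bad :=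
      fun f _ => hcon f
    exact absurd (Finset.card_le_card this) (by omega)
  obtain ⟨f, hf⟩ := this
  refine ⟨f, fun A B hA hB hAB => ?_⟩
  have hmem : (A, B) ∈ PAIRS := by
    simp only [PAIRS, mem_filter, Finset.mem_product, Finset.mem_powerset]
    exact ⟨⟨Finset.subset_univ _, Finset.subset_univ _⟩, hA, hB, hAB⟩
  have hfb : f ∉ Bad (A, B) := fun hb => hf (Finset.mem_biUnion.2 ⟨(A,B), hmem, hb⟩)
  simp only [Bad, Fintype.mem_piFinset] at hfb
  push_neg at hfb
  obtain ⟨x, hx⟩ := hfb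
  by_cases hxa : x.2 ∈ A
  · rw [if_pos hxa] at hx
    rw [Finset.mem_compl, not_not] at hx
    exact ⟨x.1, x.2, hxa, by rwa [Prod.mk.eta]⟩
  · rw [if_neg hxa] at hx
    exact absurd (Finset.mem_univ _) hx

/-! ### the sparse disperser graph and its subdivision -/

def Gm (M : ℕ) (f : Fin 15 × Fin (5*M) → Fin (5*M)) : SimpleGraph (Fin (5*M)) where
  Adj u v := u ≠ v ∧ ((u.val + 1 = v.val ∨ ∃ j, f (j, u) = v) ∨
      (v.val + 1 = u.val ∨ ∃ j, f (j, v) = u))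
  symm := by
    constructor
    rintro u v ⟨h1, h2⟩
    exact ⟨h1.symm, h2.symm⟩
  loopless := ⟨fun u h => h.1 rfl⟩

noncomputable def Pset (M : ℕ) (f : Fin 15 × Fin (5*M) → Fin (5*M)) :
    Finset (Fin (5*M) × Fin (5*M)) :=
  letI := Classical.propDecidable
  Finset.univ.filter (fun p => p.1.val < p.2.val ∧ (Gm M f).Adj p.1 p.2)

abbrev Vp (M : ℕ) (f : Fin 15 × Fin (5*M) → Fin (5*M)) :=
  Fin (5*M) ⊕ {q : Fin (5*M) × Fin (5*M) // q ∈ Pset M f}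

def Gp (M : ℕ) (f : Fin 15 × Fin (5*M) → Fin (5*M)) : SimpleGraph (Vp M f) where
  Adj a b := ∃ (u : Fin (5*M)) (q : {q : Fin (5*M) × Fin (5*M) // q ∈ Pset M f}),
      (u = q.1.1 ∨ u = q.1.2) ∧
      ((a = Sum.inl u ∧ b = Sum.inr q) ∨ (a = Sum.inr q ∧ b = Sum.inl u))
  symm := by
    constructor
    rintro a b ⟨u, q, hu, (⟨h1, h2⟩ | ⟨h1, h2⟩)⟩
    · exact ⟨u, q, hu, Or.inr ⟨h2, h1⟩⟩
    · exact ⟨u, q, hu, Or.inl ⟨h2, h1⟩⟩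
  loopless := by
    constructor
    rintro a ⟨u, q, hu, (⟨h1, h2⟩ | ⟨h1, h2⟩)⟩ <;> rw [h1] at h2 <;> simp at h2

lemma mem_Pset {M : ℕ} {f : Fin 15 × Fin (5*M) → Fin (5*M)}
    {p : Fin (5*M) × Fin (5*M)} :
    p ∈ Pset M f ↔ p.1.val < p.2.val ∧ (Gm M f).Adj p.1 p.2 := by
  classical
  rw [Pset]
  simp [Finset.mem_filter]

lemma Gp_not_adj_same_side {M : ℕ} {f : Fin 15 × Fin (5*M) → Fin (5*M)}
    {a b : Vp M f} (h : (Gp M f).Adj a b) : a.isLeft ≠ b.isLeft := by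
  obtain ⟨u, q, -, (⟨h1, h2⟩ | ⟨h1, h2⟩)⟩ := h <;> subst h1 <;> subst h2 <;> simp

lemma Gp_no_triangle {M : ℕ} {f : Fin 15 × Fin (5*M) → Fin (5*M)}
    {a b c : Vp M f} (hab : (Gp M f).Adj a b) (hbc : (Gp M f).Adj b c)
    (hac : (Gp M f).Adj a c) : False := by
  have h1 := Gp_not_adj_same_side hab
  have h2 := Gp_not_adj_same_side hbc
  have h3 := Gp_not_adj_same_side hac
  revert h1 h2 h3
  rcases a.isLeft <;> rcases b.isLeft <;> rcases c.isLeft <;> decide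

lemma Gm_adj_exists_pair {M : ℕ} {f : Fin 15 × Fin (5*M) → Fin (5*M)}
    {u v : Fin (5*M)} (h : (Gm M f).Adj u v) :
    ∃ q ∈ Pset M f, (q.1 = u ∧ q.2 = v) ∨ (q.1 = v ∧ q.2 = u) := by
  classical
  have hne : u ≠ v := h.1
  rcases lt_or_gt_of_ne (show u.val ≠ v.val from fun he => hne (Fin.ext he)) with hlt | hgt
  · exact ⟨(u, v), mem_Pset.2 ⟨hlt, h⟩, Or.inl ⟨rfl, rfl⟩⟩
  · exact ⟨(v, u), mem_Pset.2 ⟨hgt, h.symm⟩, Or.inr ⟨rfl, rfl⟩⟩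

lemma Gp_min_degree {M : ℕ} (hM : 1 ≤ M) {f : Fin 15 × Fin (5*M) → Fin (5*M)}
    (a : Vp M f) : ∃ b, (Gp M f).Adj a b := by
  classical
  rcases a with u | q
  · -- an original vertex; use the Hamiltonian path edges
    rcases Nat.lt_or_ge (u.val + 1) (5*M) with hlt | hge
    · set v : Fin (5*M) := ⟨u.val + 1, hlt⟩ with hv
      have hadj : (Gm M f).Adj u v := by
        refine ⟨fun he => ?_, Or.inl (Or.inl rfl)⟩
        have := congrArg Fin.val he
        simp [hv] at this
      have hmem : (u, v) ∈ Pset M f := mem_Pset.2 ⟨by simp [hv], hadj⟩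
      exact ⟨Sum.inr ⟨(u, v), hmem⟩, u, ⟨(u, v), hmem⟩, Or.inl rfl, Or.inl ⟨rfl, rfl⟩⟩
    · have hu : u.val = 5*M - 1 := by have := u.isLt; omega
      have hlt' : u.val - 1 < 5*M := by omega
      set v : Fin (5*M) := ⟨u.val - 1, hlt'⟩ with hv
      have hadj : (Gm M f).Adj v u := by
        refine ⟨fun he => ?_, Or.inl (Or.inl (by simp [hv]; omega))⟩
        have := congrArg Fin.val he
        simp [hv] at this
        omega
      have hmem : (v, u) ∈ Pset M f := mem_Pset.2 ⟨by simp [hv]; omega, hadj⟩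
      exact ⟨Sum.inr ⟨(v, u), hmem⟩, u, ⟨(v, u), hmem⟩, Or.inr rfl, Or.inl ⟨rfl, rfl⟩⟩
  · exact ⟨Sum.inl q.1.1, q.1.1, q, Or.inl rfl, Or.inr ⟨rfl, rfl⟩⟩

lemma Pset_card_le {M : ℕ} (hM : 1 ≤ M) (f : Fin 15 × Fin (5*M) → Fin (5*M)) :
    (Pset M f).card ≤ 155 * M := by
  classical
  have hmpos : 0 < 5*M := by omega
  let A1 : Finset (Fin (5*M) × Fin (5*M)) :=
    Finset.univ.image (fun u : Fin (5*M) =>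
      (u, (⟨(u.val + 1) % (5*M), Nat.mod_lt _ hmpos⟩ : Fin (5*M))))
  let A2 : Finset (Fin (5*M) × Fin (5*M)) :=
    Finset.univ.image (fun x : Fin 15 × Fin (5*M) => (x.2, f x))
  let A3 : Finset (Fin (5*M) × Fin (5*M)) :=
    Finset.univ.image (fun x : Fin 15 × Fin (5*M) => (f x, x.2))
  have hsub : Pset M f ⊆ A1 ∪ A2 ∪ A3 := by
    intro p hp
    obtain ⟨hlt, -, hadj⟩ := mem_Pset.1 hp
    rcases hadj with (h | ⟨j, hj⟩) | (h | ⟨j, hj⟩)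
    · apply Finset.mem_union_left; apply Finset.mem_union_left
      apply Finset.mem_image.2
      refine ⟨p.1, Finset.mem_univ _, ?_⟩
      have : ((⟨(p.1.val + 1) % (5*M), Nat.mod_lt _ hmpos⟩ : Fin (5*M))) = p.2 := by
        apply Fin.ext
        simp only
        rw [h, Nat.mod_eq_of_lt p.2.isLt]
      rw [this]
    · apply Finset.mem_union_left; apply Finset.mem_union_right
      exact Finset.mem_image.2 ⟨(j, p.1), Finset.mem_univ _, by rw [hj]⟩
    · omega
    · apply Finset.mem_union_right
      exact Finset.mem_image.2 ⟨(j, p.2), Finset.mem_univ _, by rw [hj]⟩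
  calc (Pset M f).card ≤ (A1 ∪ A2 ∪ A3).card := Finset.card_le_card hsub
    _ ≤ A1.card + A2.card + A3.card := by
        apply le_trans (Finset.card_union_le _ _)
        have := Finset.card_union_le A1 A2
        omega
    _ ≤ 5*M + 15*(5*M) + 15*(5*M) := by
        have h1 : A1.card ≤ 5*M := le_trans (Finset.card_image_le) (by simp)
        have h2 : A2.card ≤ 15*(5*M) := le_trans (Finset.card_image_le) (by simp)
        have h3 : A3.card ≤ 15*(5*M) := le_trans (Finset.card_image_le) (by simp)
        omega
    _ = 155 * M := by omega

theorem main_core (M : ℕ) (hM : 1 ≤ M) (f : Fin 15 × Fin (5*M) → Fin (5*M))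
    (hgood : ∀ A B : Finset (Fin (5*M)), A.card = 2*M → B.card = 2*M → Disjoint A B →
      ∃ j a, a ∈ A ∧ f (j, a) ∈ B) :
    ∃ n, 5*M ≤ n ∧ ∃ G : SimpleGraph (Fin n),
      Nat.card G.edgeSet ≤ 2 * n ∧
      ∀ (w h : ℕ) (rep : Fin n → GridPath),
        IsEPGRep G rep → (∀ v, (rep v).InGrid w h) →
        n ≤ 2560 * h ∧ n ≤ 2560 * w := by
  classical
  set n := 5*M + (Pset M f).card with hn
  have hcardV : Fintype.card (Vp M f) = n := by
    simp [Vp, Fintype.card_sum, Fintype.card_coe, hn]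
  let e : Vp M f ≃ Fin n := Fintype.equivFinOfCardEq hcardV
  let G : SimpleGraph (Fin n) := SimpleGraph.comap (⇑e.symm) (Gp M f)
  have hAdjG : ∀ a b : Vp M f, G.Adj (e a) (e b) ↔ (Gp M f).Adj a b := by
    intro a b
    simp [G, SimpleGraph.comap]
  refine ⟨n, by omega, G, ?_, ?_⟩
  · -- edge count bound
    let F : ({q : Fin (5*M) × Fin (5*M) // q ∈ Pset M f} × Bool) → G.edgeSet := fun qb =>
      ⟨s(e (Sum.inl (if qb.2 then qb.1.1.1 else qb.1.1.2)), e (Sum.inr qb.1)), by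
        rw [SimpleGraph.mem_edgeSet, hAdjG]
        refine ⟨if qb.2 then qb.1.1.1 else qb.1.1.2, qb.1, ?_, Or.inl ⟨rfl, rfl⟩⟩
        rcases qb.2 with _ | _ <;> simp⟩
    have hFsurj : Function.Surjective F := by
      rintro ⟨ed, hed⟩
      induction ed using Sym2.ind with
      | _ xx yy =>
        rw [SimpleGraph.mem_edgeSet] at hed
        have hed' : (Gp M f).Adj (e.symm xx) (e.symm yy) := hed
        obtain ⟨u, q, hu, (⟨h1, h2⟩ | ⟨h1, h2⟩)⟩ := hed'
        · have hx : xx = e (Sum.inl u) := by rw [← h1]; simp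
          have hy : yy = e (Sum.inr q) := by rw [← h2]; simp
          rcases hu with hu | hu
          · exact ⟨(q, true), Subtype.ext (by simp only [F]; rw [hx, hy, ← hu]; simp)⟩
          · exact ⟨(q, false), Subtype.ext (by simp only [F]; rw [hx, hy, ← hu]; simp)⟩
        · have hx : xx = e (Sum.inr q) := by rw [← h1]; simp
          have hy : yy = e (Sum.inl u) := by rw [← h2]; simp
          rcases hu with hu | hu
          · refine ⟨(q, true), Subtype.ext ?_⟩
            simp only [F]
            rw [hx, hy, ← hu, Sym2.eq_swap]
            simp
          · refine ⟨(q, false), Subtype.ext ?_⟩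
            simp only [F]
            rw [hx, hy, ← hu, Sym2.eq_swap]
            simp
    have := Nat.card_le_card_of_surjective F hFsurj
    have hcard2 : Nat.card ({q : Fin (5*M) × Fin (5*M) // q ∈ Pset M f} × Bool)
        = (Pset M f).card * 2 := by
      rw [Nat.card_eq_fintype_card, Fintype.card_prod, Fintype.card_coe, Fintype.card_bool]
    omega
  · -- grid bounds
    have key : ∀ (w h : ℕ) (rep : Fin n → GridPath), IsEPGRep G rep →
        (∀ v, (rep v).InGrid w h) → M ≤ 16 * h := by
      clear hAdjG
      intro w h rep hrep hgrid
      have hAdjG : ∀ a b : Vp M f, G.Adj (e a) (e b) ↔ (Gp M f).Adj a b := by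
        intro a b
        simp [G, SimpleGraph.comap]
      set rp : Vp M f → GridPath := fun a => rep (e a) with hrp
      have hrep' : ∀ a b : Vp M f, (Gp M f).Adj a b ↔
          a ≠ b ∧ ((rp a).edges ∩ (rp b).edges).Nonempty := by
        intro a b
        rw [← hAdjG, hrep (e a) (e b)]
        constructor
        · rintro ⟨h1, h2⟩
          exact ⟨fun hh => h1 (congrArg e hh), h2⟩
        · rintro ⟨h1, h2⟩
          exact ⟨fun hh => h1 (e.injective hh), h2⟩
      have hlen : ∀ a : Vp M f, 0 < (rp a).len := by
        intro a
        obtain ⟨b, hb⟩ := Gp_min_degree hM a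
        obtain ⟨-, ed, hed, -⟩ := (hrep' a b).1 hb
        obtain ⟨i, -⟩ := hed
        exact i.pos
      have hshare : ∀ a b : Vp M f, (Gp M f).Adj a b → ∃ z : ℤ,
          (rp a).lcol ≤ z ∧ z ≤ (rp a).rcol ∧ (rp b).lcol ≤ z ∧ z ≤ (rp b).rcol := by
        intro a b hab
        obtain ⟨-, ed, hedA, hedB⟩ := (hrep' a b).1 hab
        obtain ⟨i, hi⟩ := hedA
        obtain ⟨j, hj⟩ := hedB
        rw [hi, Sym2.eq_iff] at hj
        rcases hj with ⟨h1, -⟩ | ⟨h1, -⟩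
        · refine ⟨((rp a).pts i.castSucc).1, (rp a).lcol_le _, (rp a).le_rcol _, ?_, ?_⟩
          · rw [h1]; exact (rp b).lcol_le _
          · rw [h1]; exact (rp b).le_rcol _
        · refine ⟨((rp a).pts i.castSucc).1, (rp a).lcol_le _, (rp a).le_rcol _, ?_, ?_⟩
          · rw [h1]; exact (rp b).lcol_le _
          · rw [h1]; exact (rp b).le_rcol _
      have hlcol1 : ∀ a : Vp M f, 1 ≤ (rp a).lcol := by
        intro a
        obtain ⟨i, hi⟩ := (rp a).exists_lcol
        rw [← hi]
        exact (hgrid (e a) _ ⟨i, rfl⟩).1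
      have hrcolw : ∀ a : Vp M f, (rp a).rcol ≤ (w:ℤ) := by
        intro a
        obtain ⟨i, hi⟩ := (rp a).exists_rcol
        rw [← hi]
        exact (hgrid (e a) _ ⟨i, rfl⟩).2.1
      -- coverage bound on the subdivision level
      have hcovV : ∀ x : ℤ, (Finset.univ.filter
          (fun a : Vp M f => (rp a).lcol ≤ x ∧ x ≤ (rp a).rcol)).card ≤ 8 * h := by
        intro x
        set cov := Finset.univ.filter
          (fun a : Vp M f => (rp a).lcol ≤ x ∧ x ≤ (rp a).rcol) with hcov
        set DIRS : Finset (ℤ×ℤ) := {((1:ℤ),(0:ℤ)),(-1,0),(0,1),(0,-1)} with hD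
        set Fx : Finset (Sym2 (ℤ×ℤ)) := (Finset.Icc (1:ℤ) (h:ℤ) ×ˢ DIRS).image
          (fun yd => s(((x, yd.1) : ℤ×ℤ), ((x + yd.2.1, yd.1 + yd.2.2) : ℤ×ℤ))) with hFx
        have hFxcard : Fx.card ≤ 4 * h := by
          calc Fx.card ≤ ((Finset.Icc (1:ℤ) (h:ℤ)) ×ˢ DIRS).card := Finset.card_image_le
            _ ≤ h * 4 := by
                rw [Finset.card_product]
                apply Nat.mul_le_mul
                · rw [Int.card_Icc]; simp
                · have c1 := Finset.card_insert_le ((1:ℤ),(0:ℤ))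
                    ({(-1,0),(0,1),(0,-1)} : Finset (ℤ×ℤ))
                  have c2 := Finset.card_insert_le ((-1:ℤ),(0:ℤ))
                    ({(0,1),(0,-1)} : Finset (ℤ×ℤ))
                  have c3 := Finset.card_insert_le ((0:ℤ),(1:ℤ))
                    ({(0,-1)} : Finset (ℤ×ℤ))
                  have c4 : ({((0:ℤ),(-1:ℤ))} : Finset (ℤ×ℤ)).card = 1 :=
                    Finset.card_singleton _
                  rw [hD]
                  omega
            _ = 4 * h := by ring
        have hsel : ∀ a ∈ cov, ∃ ed, ed ∈ (rp a).edges ∧ ed ∈ Fx := by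
          intro a ha
          rw [hcov, Finset.mem_filter] at ha
          obtain ⟨i, hix⟩ := (rp a).exists_col x ha.2.1 ha.2.2
          obtain ⟨b, hb_mem, hb_adj, hb_pts⟩ := (rp a).exists_edge_at (hlen a) i
          refine ⟨s((rp a).pts i, b), hb_mem, ?_⟩
          have hgp := hgrid (e a) ((rp a).pts i) ⟨i, rfl⟩
          set p := (rp a).pts i with hp
          have hδ : ∃ δ ∈ DIRS, b = (p.1 + δ.1, p.2 + δ.2) := by
            rcases hb_adj with ⟨h1, h2 | h2⟩ | ⟨h1, h2 | h2⟩
            · refine ⟨(0,-1), by simp [hD], ?_⟩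
              apply Prod.ext <;> simp <;> omega
            · refine ⟨(0,1), by simp [hD], ?_⟩
              apply Prod.ext <;> simp <;> omega
            · refine ⟨(-1,0), by simp [hD], ?_⟩
              apply Prod.ext <;> simp <;> omega
            · refine ⟨(1,0), by simp [hD], ?_⟩
              apply Prod.ext <;> simp <;> omega
          obtain ⟨δ, hδ1, hδ2⟩ := hδ
          rw [hFx, Finset.mem_image]
          refine ⟨(p.2, δ), Finset.mem_product.2
            ⟨Finset.mem_Icc.2 ⟨hgp.2.2.1, hgp.2.2.2⟩, hδ1⟩, ?_⟩
          rw [hδ2]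
          have hpx : ((x, p.2) : ℤ×ℤ) = p := by
            apply Prod.ext
            · simp [hix]
            · simp
          have hbx : ((x + δ.1, p.2 + δ.2) : ℤ×ℤ) = (p.1 + δ.1, p.2 + δ.2) := by
            apply Prod.ext
            · simp [hix]
            · simp
          rw [hpx, hbx]
        let φ : Vp M f → Sym2 (ℤ×ℤ) := fun a =>
          if hc : ∃ ed, ed ∈ (rp a).edges ∧ ed ∈ Fx then hc.choose
          else s(((0:ℤ),(0:ℤ)), ((0:ℤ),(0:ℤ)))
        have hφ : ∀ a ∈ cov, φ a ∈ (rp a).edges ∧ φ a ∈ Fx := by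
          intro a ha
          have hc := hsel a ha
          simp only [φ, dif_pos hc]
          exact hc.choose_spec
        have himg : cov.image φ ⊆ Fx := by
          intro ed hed
          obtain ⟨a, ha, rfl⟩ := Finset.mem_image.1 hed
          exact (hφ a ha).2
        have hfiber : ∀ ed ∈ cov.image φ, (cov.filter (fun a => φ a = ed)).card ≤ 2 := by
          intro ed _
          by_contra hgt
          push_neg at hgt
          obtain ⟨t, hts, htc⟩ := Finset.exists_subset_card_eq (s := cov.filter (fun a => φ a = ed)) (n := 3) (by omega)
          obtain ⟨a, b, c, hab, hac, hbc, rfl⟩ := Finset.card_eq_three.1 htc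
          have hmem : ∀ z ∈ ({a, b, c} : Finset (Vp M f)), z ∈ cov ∧ ed ∈ (rp z).edges := by
            intro z hz
            have := Finset.mem_filter.1 (hts hz)
            refine ⟨this.1, ?_⟩
            rw [← this.2]
            exact (hφ z this.1).1
          have hea := hmem a (Finset.mem_insert_self _ _)
          have heb := hmem b (Finset.mem_insert_of_mem (Finset.mem_insert_self _ _))
          have hec := hmem c (Finset.mem_insert_of_mem (Finset.mem_insert_of_mem
            (Finset.mem_singleton_self _)))
          have hadjab : (Gp M f).Adj a b := (hrep' a b).2 ⟨hab, ed, hea.2, heb.2⟩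
          have hadjbc : (Gp M f).Adj b c := (hrep' b c).2 ⟨hbc, ed, heb.2, hec.2⟩
          have hadjac : (Gp M f).Adj a c := (hrep' a c).2 ⟨hac, ed, hea.2, hec.2⟩
          exact Gp_no_triangle hadjab hadjbc hadjac
        calc cov.card ≤ 2 * (cov.image φ).card := Finset.card_le_mul_card_image _ 2 hfiber
          _ ≤ 2 * Fx.card := by
              have := Finset.card_le_card himg
              omega
          _ ≤ 8 * h := by omega
      -- clusters
      let owner : Vp M f → Fin (5*M) := Sum.elim id (fun q => q.1.1)
      let clF : Fin (5*M) → Finset (Vp M f) :=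
        fun u => Finset.univ.filter (fun a => owner a = u)
      have hclI : ∀ u, (Sum.inl u : Vp M f) ∈ clF u := by
        intro u
        simp [clF, owner]
      have hclne : ∀ u, ((clF u).image (fun a => (rp a).lcol)).Nonempty :=
        fun u => Finset.Nonempty.image ⟨_, hclI u⟩ _
      have hclne' : ∀ u, ((clF u).image (fun a => (rp a).rcol)).Nonempty :=
        fun u => Finset.Nonempty.image ⟨_, hclI u⟩ _
      let Lc : Fin (5*M) → ℤ := fun u => ((clF u).image (fun a => (rp a).lcol)).min' (hclne u)
      let Rc : Fin (5*M) → ℤ := fun u => ((clF u).image (fun a => (rp a).rcol)).max' (hclne' u)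
      have hLc_le : ∀ u, ∀ a ∈ clF u, Lc u ≤ (rp a).lcol := by
        intro u a ha
        exact Finset.min'_le _ _ (Finset.mem_image_of_mem _ ha)
      have hle_Rc : ∀ u, ∀ a ∈ clF u, (rp a).rcol ≤ Rc u := by
        intro u a ha
        apply Finset.le_max'
        exact Finset.mem_image_of_mem _ ha
      have hLc_ex : ∀ u, ∃ a ∈ clF u, (rp a).lcol = Lc u := by
        intro u
        have := Finset.min'_mem _ (hclne u)
        rw [Finset.mem_image] at this
        obtain ⟨a, ha, hval⟩ := this
        exact ⟨a, ha, hval⟩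
      have hRc_ex : ∀ u, ∃ a ∈ clF u, (rp a).rcol = Rc u := by
        intro u
        have := Finset.max'_mem _ (hclne' u)
        rw [Finset.mem_image] at this
        obtain ⟨a, ha, hval⟩ := this
        exact ⟨a, ha, hval⟩
      have howner : ∀ u, ∀ a ∈ clF u, owner a = u := by
        intro u a ha
        exact (Finset.mem_filter.1 ha).2
      have hmeet : ∀ u, ∀ a ∈ clF u, ∃ z : ℤ,
          (rp (Sum.inl u)).lcol ≤ z ∧ z ≤ (rp (Sum.inl u)).rcol ∧
          (rp a).lcol ≤ z ∧ z ≤ (rp a).rcol := by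
        intro u a ha
        rcases a with u' | q
        · have : u' = u := howner u _ ha
          subst this
          exact ⟨(rp (Sum.inl u')).lcol, le_refl _, (rp _).lcol_le_rcol, le_refl _,
            (rp _).lcol_le_rcol⟩
        · have hq : q.1.1 = u := by
            have := howner u _ ha
            simpa [owner] using this
          have hadj : (Gp M f).Adj (Sum.inl u) (Sum.inr q) :=
            ⟨u, q, Or.inl hq.symm, Or.inl ⟨rfl, rfl⟩⟩
          exact hshare _ _ hadj
      have hLcRc : ∀ u, Lc u ≤ Rc u := by
        intro u
        calc Lc u ≤ (rp (Sum.inl u)).lcol := hLc_le u _ (hclI u)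
          _ ≤ (rp (Sum.inl u)).rcol := (rp _).lcol_le_rcol
          _ ≤ Rc u := hle_Rc u _ (hclI u)
      have hstar : ∀ u, ∀ x : ℤ, Lc u ≤ x → x ≤ Rc u →
          ∃ a ∈ clF u, (rp a).lcol ≤ x ∧ x ≤ (rp a).rcol := by
        intro u x hx1 hx2
        obtain ⟨γ, hγ, hγv⟩ := hLc_ex u
        obtain ⟨δ, hδ, hδv⟩ := hRc_ex u
        by_cases hc1 : x ≤ (rp γ).rcol
        · exact ⟨γ, hγ, by omega, hc1⟩
        by_cases hc2 : (rp δ).lcol ≤ x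
        · exact ⟨δ, hδ, hc2, by omega⟩
        push_neg at hc1 hc2
        obtain ⟨z1, hz11, hz12, hz13, hz14⟩ := hmeet u γ hγ
        obtain ⟨z2, hz21, hz22, hz23, hz24⟩ := hmeet u δ hδ
        exact ⟨Sum.inl u, hclI u, by omega, by omega⟩
      -- coverage bound at the cluster level
      have hcovG : ∀ x : ℤ, (Finset.univ.filter
          (fun u : Fin (5*M) => Lc u ≤ x ∧ x ≤ Rc u)).card ≤ 8 * h := by
        intro x
        set covG := Finset.univ.filter (fun u : Fin (5*M) => Lc u ≤ x ∧ x ≤ Rc u) with hcovGd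
        let ψ : Fin (5*M) → Vp M f := fun u =>
          if hc : ∃ a, a ∈ clF u ∧ (rp a).lcol ≤ x ∧ x ≤ (rp a).rcol
          then hc.choose else Sum.inl u
        have hψ : ∀ u ∈ covG, ψ u ∈ clF u ∧ (rp (ψ u)).lcol ≤ x ∧ x ≤ (rp (ψ u)).rcol := by
          intro u hu
          rw [hcovGd, Finset.mem_filter] at hu
          obtain ⟨a, ha, hb⟩ := hstar u x hu.2.1 hu.2.2
          have hc : ∃ a, a ∈ clF u ∧ (rp a).lcol ≤ x ∧ x ≤ (rp a).rcol := ⟨a, ha, hb⟩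
          simp only [ψ, dif_pos hc]
          exact hc.choose_spec
        apply le_trans _ (hcovV x)
        apply Finset.card_le_card_of_injOn ψ
        · intro u hu
          rw [Finset.mem_coe, Finset.mem_filter]
          exact ⟨Finset.mem_univ _, (hψ u hu).2⟩
        · intro u hu u' hu' heq
          have h1 := howner u _ (hψ u hu).1
          have h2 := howner u' _ (hψ u' hu').1
          rw [← h1, ← h2, heq]
      -- the sweep
      have hRcw : ∀ u, Rc u ≤ (w:ℤ) := by
        intro u
        apply Finset.max'_le
        intro y hy
        rw [Finset.mem_image] at hy
        obtain ⟨a, -, rfl⟩ := hy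
        exact hrcolw a
      have hLc1 : ∀ u, 1 ≤ Lc u := by
        intro u
        obtain ⟨a, ha, hval⟩ := hLc_ex u
        rw [← hval]
        exact hlcol1 a
      let A : ℕ → Finset (Fin (5*M)) := fun t =>
        Finset.univ.filter (fun u => Rc u ≤ (t:ℤ))
      have hqex : ∃ t, 2*M ≤ (A t).card := by
        refine ⟨w, ?_⟩
        have : A w = Finset.univ := by
          apply Finset.eq_univ_of_forall
          intro u
          simp only [A, Finset.mem_filter]
          exact ⟨Finset.mem_univ _, hRcw u⟩
        rw [this, Finset.card_univ, Fintype.card_fin]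
        omega
      set x₀ := Nat.find hqex with hx₀
      have hx₀spec : 2*M ≤ (A x₀).card := Nat.find_spec hqex
      have hx₀pos : 1 ≤ x₀ := by
        rcases Nat.eq_zero_or_pos x₀ with h0 | h0
        · exfalso
          have : A 0 = ∅ := by
            apply Finset.eq_empty_of_forall_notMem
            intro u hu
            simp only [A, Finset.mem_filter] at hu
            have := hLc1 u
            have := hLcRc u
            push_cast at hu
            omega
          rw [h0] at hx₀spec
          rw [this] at hx₀spec
          simp at hx₀spec
          omega
        · omega
      have hprev : (A (x₀ - 1)).card < 2*M := by
        have := Nat.find_min hqex (show x₀ - 1 < x₀ by omega)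
        omega
      -- split A x₀
      have hAsub : A x₀ ⊆ A (x₀ - 1) ∪ (Finset.univ.filter
          (fun u : Fin (5*M) => Lc u ≤ (x₀:ℤ) ∧ (x₀:ℤ) ≤ Rc u)) := by
        intro u hu
        simp only [A, Finset.mem_filter] at hu
        rcases le_or_gt (Rc u) ((x₀:ℤ) - 1) with hc | hc
        · apply Finset.mem_union_left
          simp only [A, Finset.mem_filter]
          refine ⟨Finset.mem_univ _, ?_⟩
          push_cast
          omega
        · apply Finset.mem_union_right
          rw [Finset.mem_filter]
          have := hLcRc u
          exact ⟨Finset.mem_univ _, by omega, by omega⟩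
      have hAcard : (A x₀).card ≤ (2*M - 1) + 8*h := by
        calc (A x₀).card ≤ _ := Finset.card_le_card hAsub
          _ ≤ (A (x₀-1)).card + (Finset.univ.filter
              (fun u : Fin (5*M) => Lc u ≤ (x₀:ℤ) ∧ (x₀:ℤ) ≤ Rc u)).card :=
            Finset.card_union_le _ _
          _ ≤ (2*M - 1) + 8*h := by
              have := hcovG (x₀:ℤ)
              omega
      -- B side
      let B : Finset (Fin (5*M)) := Finset.univ.filter (fun u => (x₀:ℤ) + 1 ≤ Lc u)
      have hdisj : Disjoint (A x₀) B := by
        rw [Finset.disjoint_left]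
        intro u hu hub
        simp only [A, Finset.mem_filter] at hu
        simp only [B, Finset.mem_filter] at hub
        have := hLcRc u
        omega
      have hcover : (Finset.univ : Finset (Fin (5*M))) ⊆ A x₀ ∪ B ∪
          (Finset.univ.filter (fun u : Fin (5*M) => Lc u ≤ (x₀:ℤ) ∧ (x₀:ℤ) ≤ Rc u)) := by
        intro u _
        by_cases hc1 : Rc u ≤ (x₀:ℤ)
        · apply Finset.mem_union_left; apply Finset.mem_union_left
          simp only [A, Finset.mem_filter]
          exact ⟨Finset.mem_univ _, hc1⟩
        by_cases hc2 : (x₀:ℤ) + 1 ≤ Lc u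
        · apply Finset.mem_union_left; apply Finset.mem_union_right
          simp only [B, Finset.mem_filter]
          exact ⟨Finset.mem_univ _, hc2⟩
        · apply Finset.mem_union_right
          rw [Finset.mem_filter]
          exact ⟨Finset.mem_univ _, by omega, by omega⟩
      -- no cross edges
      have hnc : ∀ u v : Fin (5*M), u ∈ A x₀ → v ∈ B → ¬ (Gm M f).Adj u v := by
        intro u v hu hv hadj
        simp only [A, Finset.mem_filter] at hu
        simp only [B, Finset.mem_filter] at hv
        obtain ⟨q, hq, hcase⟩ := Gm_adj_exists_pair hadj
        rcases hcase with ⟨h1, h2⟩ | ⟨h1, h2⟩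
        · have hmemcl : (Sum.inr ⟨q, hq⟩ : Vp M f) ∈ clF u := by
            simp only [clF, owner, Finset.mem_filter]
            exact ⟨Finset.mem_univ _, by simp [h1]⟩
          have hadj' : (Gp M f).Adj (Sum.inr ⟨q, hq⟩) (Sum.inl v) :=
            ⟨v, ⟨q, hq⟩, Or.inr h2.symm, Or.inr ⟨rfl, rfl⟩⟩
          obtain ⟨z, hz1, hz2, hz3, hz4⟩ := hshare _ _ hadj'
          have hzu : z ≤ Rc u := le_trans hz2 (hle_Rc u _ hmemcl)
          have hzv : Lc v ≤ z := le_trans (hLc_le v _ (hclI v)) hz3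
          omega
        · have hmemcl : (Sum.inr ⟨q, hq⟩ : Vp M f) ∈ clF v := by
            simp only [clF, owner, Finset.mem_filter]
            exact ⟨Finset.mem_univ _, by simp [h1]⟩
          have hadj' : (Gp M f).Adj (Sum.inl u) (Sum.inr ⟨q, hq⟩) :=
            ⟨u, ⟨q, hq⟩, Or.inr h2.symm, Or.inl ⟨rfl, rfl⟩⟩
          obtain ⟨z, hz1, hz2, hz3, hz4⟩ := hshare _ _ hadj'
          have hzu : z ≤ Rc u := le_trans hz2 (hle_Rc u _ (hclI u))
          have hzv : Lc v ≤ z := le_trans (hLc_le v _ hmemcl) hz3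
          omega
      -- B is small
      have hBcard : B.card ≤ 2*M - 1 := by
        by_contra hbig
        push_neg at hbig
        obtain ⟨A', hA's, hA'c⟩ := Finset.exists_subset_card_eq hx₀spec
        obtain ⟨B', hB's, hB'c⟩ := Finset.exists_subset_card_eq (s := B) (n := 2*M) (by omega)
        have hdisj' : Disjoint A' B' :=
          Finset.disjoint_of_subset_left hA's (Finset.disjoint_of_subset_right hB's hdisj)
        obtain ⟨j, a, haA, hfB⟩ := hgood A' B' hA'c hB'c hdisj'
        have hane : a ≠ f (j, a) := by
          intro heq
          rw [Finset.disjoint_left] at hdisj'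
          exact hdisj' haA (heq ▸ hfB)
        have : (Gm M f).Adj a (f (j, a)) := ⟨hane, Or.inl (Or.inr ⟨j, rfl⟩)⟩
        exact hnc a (f (j, a)) (hA's haA) (hB's hfB) this
      -- combining
      have hcards : 5*M ≤ (A x₀).card + B.card + 8*h := by
        have h1 := Finset.card_le_card hcover
        have h2 : (A x₀ ∪ B ∪ (Finset.univ.filter
            (fun u : Fin (5*M) => Lc u ≤ (x₀:ℤ) ∧ (x₀:ℤ) ≤ Rc u))).card ≤
            (A x₀).card + B.card + 8*h := by
          apply le_trans (Finset.card_union_le _ _)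
          have h3 := Finset.card_union_le (A x₀) B
          have h4 := hcovG (x₀:ℤ)
          omega
        rw [Finset.card_univ, Fintype.card_fin] at h1
        omega
      omega
    intro w h rep hrep hgrid
    have hP := Pset_card_le hM f
    constructor
    · have := key w h rep hrep hgrid
      omega
    · have hT := key h w (fun v => (rep v).transpose)
        (isEPGRep_transpose G rep hrep)
        (fun v => GridPath.transpose_inGrid _ _ _ (hgrid v))
      omega


/-- There are `n`-vertex graphs with `O(n)` edges whose every EPG-representation
needs a grid with `Ω(n)` rows and `Ω(n)` columns, hence `Ω(n²)` area. -/
theorem stmt19 :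
    ∃ C c : ℕ, 0 < c ∧ ∀ n₀ : ℕ, ∃ n, n₀ ≤ n ∧ ∃ G : SimpleGraph (Fin n),
      Nat.card G.edgeSet ≤ C * n ∧
      ∀ (w h : ℕ) (rep : Fin n → GridPath),
        IsEPGRep G rep → (∀ v, (rep v).InGrid w h) →
        n ≤ c * h ∧ n ≤ c * w := by
  refine ⟨2, 2560, by norm_num, fun n₀ => ?_⟩
  obtain ⟨f, hf⟩ := exists_disperser (max n₀ 1) (le_max_right _ _)
  obtain ⟨n, hn1, G, hG1, hG2⟩ := main_core (max n₀ 1) (le_max_right _ _) f hf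
  exact ⟨n, le_trans (by omega : n₀ ≤ 5 * max n₀ 1) hn1, G, hG1, hG2⟩
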